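/- Let T be a Hom-finite Krull-Schmidt K-category over an algebraically closed field with Jacobson radical J, I an ideal, and f: X -> Y a morphism between indecomposable objects. Then f is left I-irreducible if and only if f ∈ I(X, Y) \ (J∘I)(X, Y), where J∘I denotes the product ideal {Σ r_k∘i_k | r_k ∈ J, i_k ∈ I}. -/

import Mathlib

open CategoryTheory CategoryTheory.Limits CategoryTheory.Pretriangulated

universe v u

variable {C : Type u} [Category.{v} C]

/-- An ideal of a preadditive category: an additive sub-bifunctor of `Hom(-,-)`. -/
structure CatIdeal (C : Type u) [Category.{v} C] [Preadditive C] where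
  carrier : ∀ {X Y : C}, Set (X ⟶ Y)
  add_mem : ∀ {X Y : C} {f g : X ⟶ Y}, f ∈ carrier → g ∈ carrier → f + g ∈ carrier
  zero_mem : ∀ {X Y : C}, (0 : X ⟶ Y) ∈ carrier
  neg_mem : ∀ {X Y : C} {f : X ⟶ Y}, f ∈ carrier → -f ∈ carrier
  comp_left : ∀ {X Y Z : C} (f : X ⟶ Y) {g : Y ⟶ Z}, g ∈ carrier → f ≫ g ∈ carrier
  comp_right : ∀ {X Y Z : C} {f : X ⟶ Y} (g : Y ⟶ Z), f ∈ carrier → f ≫ g ∈ carrier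

variable [Preadditive C]

/-- `h` is left `I`-irreducible: `h ∈ I` and for every factorization `h = h₂ ∘ h₁` with
`h₁ ∈ I`, the morphism `h₂` is a split epimorphism. -/
def LeftIIrreducible (I : CatIdeal C) {X Y : C} (h : X ⟶ Y) : Prop :=
  h ∈ I.carrier ∧ ∀ {Z : C} (h₁ : X ⟶ Z) (h₂ : Z ⟶ Y), h₁ ≫ h₂ = h → h₁ ∈ I.carrier →
    ∃ s : Y ⟶ Z, s ≫ h₂ = 𝟙 Y

/-- `f` lies in the Jacobson radical of the category. -/
def InJacobsonRadical {X Y : C} (f : X ⟶ Y) : Prop :=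
  ∀ g : Y ⟶ X, IsIso (𝟙 X - f ≫ g)

/-- An object is indecomposable if it is nonzero and any biproduct decomposition of it is
trivial. -/
def IndecomposableObj [HasZeroObject C] [HasBinaryBiproducts C] (X : C) : Prop :=
  ¬ IsZero X ∧ ∀ (Y Z : C), (X ≅ Y ⊞ Z) → IsZero Y ∨ IsZero Z

/-- Membership in the product ideal `J ∘ I`: finite sums of composites `j ∘ i` with
`i ∈ I` and `j` in the Jacobson radical. -/
def MemRadCompIdeal (I : CatIdeal C) {X Y : C} (f : X ⟶ Y) : Prop :=
  f ∈ AddSubgroup.closure {g : X ⟶ Y | ∃ (Z : C) (i : X ⟶ Z) (j : Z ⟶ Y),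
    i ∈ I.carrier ∧ InJacobsonRadical j ∧ i ≫ j = g}

lemma swap_isIso {X Y : C} (f : X ⟶ Y) (g : Y ⟶ X) (h : IsIso (𝟙 X - f ≫ g)) :
    IsIso (𝟙 Y - g ≫ f) := by
  set u := inv (𝟙 X - f ≫ g) with hu
  have h1 : (𝟙 X - f ≫ g) ≫ u = 𝟙 X := IsIso.hom_inv_id _
  have h2 : u ≫ (𝟙 X - f ≫ g) = 𝟙 X := IsIso.inv_hom_id _
  refine ⟨⟨𝟙 Y + g ≫ u ≫ f, ?_, ?_⟩⟩
  · have e1 : (𝟙 Y - g ≫ f) ≫ (𝟙 Y + g ≫ u ≫ f)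
        = g ≫ (((𝟙 X - f ≫ g) ≫ u) ≫ f) + (𝟙 Y - g ≫ f) := by
      simp only [Preadditive.sub_comp, Preadditive.comp_sub, Preadditive.add_comp,
        Preadditive.comp_add, Category.comp_id, Category.id_comp, Category.assoc]
      abel
    rw [e1, h1, Category.id_comp]
    abel
  · have e2 : (𝟙 Y + g ≫ u ≫ f) ≫ (𝟙 Y - g ≫ f)
        = g ≫ ((u ≫ (𝟙 X - f ≫ g)) ≫ f) + (𝟙 Y - g ≫ f) := by
      simp only [Preadditive.sub_comp, Preadditive.comp_sub, Preadditive.add_comp,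
        Preadditive.comp_add, Category.comp_id, Category.id_comp, Category.assoc]
      abel
    rw [e2, h2, Category.id_comp]
    abel

lemma rad_zero {X Y : C} : InJacobsonRadical (0 : X ⟶ Y) := fun g => by
  simp only [Limits.zero_comp, sub_zero]; infer_instance

lemma rad_comp_left {W X Y : C} (v : W ⟶ X) {f : X ⟶ Y} (hf : InJacobsonRadical f) :
    InJacobsonRadical (v ≫ f) := fun g => by
  have h0 : IsIso (𝟙 X - (f ≫ g) ≫ v) := by
    have := hf (g ≫ v); simpa [Category.assoc] using this
  have := swap_isIso (f ≫ g) v h0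
  simpa [Category.assoc] using this

lemma rad_comp_right {X Y W : C} (w : Y ⟶ W) {f : X ⟶ Y} (hf : InJacobsonRadical f) :
    InJacobsonRadical (f ≫ w) := fun g => by
  have := hf (w ≫ g); simpa [Category.assoc] using this

lemma rad_add {X Y : C} {f f' : X ⟶ Y} (hf : InJacobsonRadical f)
    (hf' : InJacobsonRadical f') : InJacobsonRadical (f + f') := fun g => by
  have h1 : IsIso (𝟙 X - f ≫ g) := hf g
  set u := inv (𝟙 X - f ≫ g) with hu
  have h3 : (𝟙 X - f ≫ g) ≫ u = 𝟙 X := IsIso.hom_inv_id _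
  have h2 : IsIso (𝟙 X - u ≫ (f' ≫ g)) := by
    apply swap_isIso (f' ≫ g) u
    have := hf' (g ≫ u); simpa [Category.assoc] using this
  have key : 𝟙 X - (f + f') ≫ g = (𝟙 X - f ≫ g) ≫ (𝟙 X - u ≫ (f' ≫ g)) := by
    rw [Preadditive.comp_sub, Category.comp_id, ← Category.assoc, h3, Category.id_comp,
      Preadditive.add_comp]
    abel
  rw [key]
  exact @IsIso.comp_isIso _ _ _ _ _ _ _ h1 h2

lemma idem_eq_zero_or_id [HasZeroObject C] [HasBinaryBiproducts C] [IsIdempotentComplete C]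
    {Y : C} (hY : IndecomposableObj Y) (e : Y ⟶ Y) (he : e ≫ e = e) :
    e = 0 ∨ e = 𝟙 Y := by
  obtain ⟨W, i, r, hir, hri⟩ := IsIdempotentComplete.idempotents_split Y e he
  have he' : (𝟙 Y - e) ≫ (𝟙 Y - e) = 𝟙 Y - e := by
    simp only [Preadditive.sub_comp, Preadditive.comp_sub, Category.comp_id, Category.id_comp, he]
    abel
  obtain ⟨W', i', r', hir', hri'⟩ := IsIdempotentComplete.idempotents_split Y (𝟙 Y - e) he'
  have hir2 : i ≫ r' = 0 := by
    have h0 : i ≫ r' ≫ i' = 0 := by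
      rw [hri', Preadditive.comp_sub, Category.comp_id, ← hri, ← Category.assoc, hir,
        Category.id_comp, sub_self]
    have h00 : i ≫ r' = (i ≫ r' ≫ i') ≫ r' := by
      rw [Category.assoc, Category.assoc, hir', Category.comp_id]
    rw [h00, h0, Limits.zero_comp]
  have hir3 : i' ≫ r = 0 := by
    have h0 : i' ≫ r ≫ i = 0 := by
      rw [hri, ← sub_sub_cancel (𝟙 Y) e, Preadditive.comp_sub, Category.comp_id, ← hri',
        ← Category.assoc, hir', Category.id_comp, sub_self]
    have h00 : i' ≫ r = (i' ≫ r ≫ i) ≫ r := by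
      rw [Category.assoc, Category.assoc, hir, Category.comp_id]
    rw [h00, h0, Limits.zero_comp]
  have iso : Y ≅ W ⊞ W' := by
    refine ⟨biprod.lift r r', biprod.desc i i', ?_, ?_⟩
    · rw [biprod.lift_desc, hri, hri']; abel
    · apply biprod.hom_ext' <;> apply biprod.hom_ext <;>
        simp [hir, hir', hir2, hir3]
  rcases hY.2 W W' iso with h | h
  · left; rw [← hri, h.eq_zero_of_src i, Limits.comp_zero]
  · right
    have h1 : 𝟙 Y - e = 0 := by rw [← hri', h.eq_zero_of_src i', Limits.comp_zero]
    exact (sub_eq_zero.mp h1).symm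

lemma isIso_or_isIso_one_sub (K : Type*) [Field K] [Linear K C]
    [HasZeroObject C] [HasBinaryBiproducts C] [IsIdempotentComplete C]
    {Y : C} [FiniteDimensional K (Y ⟶ Y)] (hY : IndecomposableObj Y) (a : Y ⟶ Y) :
    IsIso a ∨ IsIso (𝟙 Y - a) := by
  haveI : FiniteDimensional K (End Y) := inferInstanceAs (FiniteDimensional K (Y ⟶ Y))
  set A : End Y := a with hA
  -- descending chain of spans of powers
  set Wc : ℕ → Submodule K (End Y) :=
    fun n => Submodule.span K (Set.range fun k : ℕ => A ^ (n + k)) with hWc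
  have hmono : ∀ n, Wc (n + 1) ≤ Wc n := by
    intro n
    apply Submodule.span_le.mpr
    rintro x ⟨k, rfl⟩
    exact Submodule.subset_span ⟨k + 1, by ring_nf⟩
  have hanti : ∀ {m n : ℕ}, m ≤ n → Wc n ≤ Wc m := by
    intro m n h
    induction h with
    | refl => exact le_rfl
    | step h ih => exact le_trans (by exact hmono _) (by assumption)
  have hart : IsArtinian K (End Y) := inferInstance
  obtain ⟨n₀, hn₀⟩ := IsArtinian.monotone_stabilizes (R := K) (M := End Y)
    ⟨fun n => OrderDual.toDual (Wc n), fun m n h => hanti h⟩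
  set n : ℕ := n₀ + 1 with hn
  have hWeq : Wc n = Wc (2 * n) := by
    have h1 := hn₀ n (by omega)
    have h2 := hn₀ (2 * n) (by omega)
    exact h1.symm.trans h2
  have hmem : A ^ n ∈ Wc (2 * n) := by
    rw [← hWeq]
    exact Submodule.subset_span ⟨0, by norm_num⟩
  rw [hWc] at hmem
  rw [Finsupp.mem_span_range_iff_exists_finsupp] at hmem
  obtain ⟨c, hc⟩ := hmem
  set b : End Y := c.sum fun k t => t • A ^ k with hb
  have hcomm : Commute A b := by
    apply Commute.sum_right
    intro k _
    exact ((Commute.refl A).pow_right k).smul_right _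
  have hba : b * A ^ (2 * n) = A ^ n := by
    rw [hb, Finsupp.sum_mul, ← hc]
    apply Finsupp.sum_congr
    intro k _
    rw [smul_mul_assoc, ← pow_add, Nat.add_comm k (2 * n)]
  set e : End Y := b * A ^ n with he'
  have hpow : A ^ n * b = b * A ^ n := (hcomm.pow_left n).eq
  have h2n : A ^ (2 * n) = A ^ n * A ^ n := by rw [two_mul, pow_add]
  have hee : e * e = e := by
    calc e * e = b * (A ^ n * (b * A ^ n)) := by
          rw [he', mul_assoc]
      _ = b * ((A ^ n * b) * A ^ n) := by rw [← mul_assoc (A ^ n) b (A ^ n)]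
      _ = b * (b * (A ^ n * A ^ n)) := by rw [hpow, mul_assoc]
      _ = b * A ^ n := by rw [← h2n, hba]
      _ = e := he'.symm
  rcases idem_eq_zero_or_id hY (e : Y ⟶ Y) (by rw [← End.mul_def]; exact hee) with h | h
  · -- e = 0 : A nilpotent
    right
    have hAn : A ^ n = 0 := by
      calc A ^ n = b * A ^ (2 * n) := hba.symm
        _ = (b * A ^ n) * A ^ n := by rw [h2n, mul_assoc]
        _ = 0 := by rw [← he', h, zero_mul]
    have hnil : IsNilpotent A := ⟨n, hAn⟩
    have := hnil.isUnit_one_sub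
    rw [isUnit_iff_isIso] at this
    simpa [End.one_def] using this
  · -- e = 𝟙 : A invertible
    left
    have h1 : b * A ^ n = 1 := by rw [← he', h, End.one_def]
    have hAv : A * (b * A ^ n₀) = 1 := by
      rw [← mul_assoc, hcomm.eq, mul_assoc, ← pow_succ', ← hn, h1]
    have hvA : (b * A ^ n₀) * A = 1 := by
      rw [mul_assoc, ← pow_succ, ← hn, h1]
    have : IsUnit A := ⟨⟨A, b * A ^ n₀, hAv, hvA⟩, rfl⟩
    rw [isUnit_iff_isIso] at this
    exact this



/-- For a morphism `f : X ⟶ Y` between indecomposable objects of a Hom-finite Krull-Schmidt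
`K`-category: `f` is left `I`-irreducible iff `f ∈ I(X,Y) \ (J∘I)(X,Y)`. -/
theorem leftIIrreducible_iff_mem_sub_radComp
    (K : Type*) [Field K] [Linear K C] [HasZeroObject C]
    [HasShift C ℤ] [∀ n : ℤ, (shiftFunctor C n).Additive] [Pretriangulated C]
    [∀ X Y : C, FiniteDimensional K (X ⟶ Y)] [IsIdempotentComplete C]
    [HasBinaryBiproducts C]
    (I : CatIdeal C) {X Y : C} (f : X ⟶ Y)
    (hX : IndecomposableObj X) (hY : IndecomposableObj Y) :
    LeftIIrreducible I f ↔ (f ∈ I.carrier ∧ ¬ MemRadCompIdeal I f) := by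
  constructor
  · rintro ⟨hfI, hirr⟩
    refine ⟨hfI, ?_⟩
    intro hmem
    have hP : ∃ (Z : C) (h₁ : X ⟶ Z) (h₂ : Z ⟶ Y),
        h₁ ∈ I.carrier ∧ InJacobsonRadical h₂ ∧ h₁ ≫ h₂ = f := by
      refine AddSubgroup.closure_induction
        (p := fun g _ => ∃ (Z : C) (h₁ : X ⟶ Z) (h₂ : Z ⟶ Y),
          h₁ ∈ I.carrier ∧ InJacobsonRadical h₂ ∧ h₁ ≫ h₂ = g) ?_ ?_ ?_ ?_ hmem
      · rintro g ⟨Z, i, j, hiI, hj, rfl⟩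
        exact ⟨Z, i, j, hiI, hj, rfl⟩
      · exact ⟨X, 0, 0, I.zero_mem, rad_zero, Limits.zero_comp⟩
      · rintro g g' _ _ ⟨Z, h₁, h₂, hI1, hJ1, rfl⟩ ⟨Z', h₁', h₂', hI2, hJ2, rfl⟩
        refine ⟨Z ⊞ Z', biprod.lift h₁ h₁', biprod.desc h₂ h₂', ?_, ?_, by
          rw [biprod.lift_desc]⟩
        · have hlift : biprod.lift h₁ h₁' = h₁ ≫ biprod.inl + h₁' ≫ biprod.inr := by
            apply biprod.hom_ext <;> simp
          rw [hlift]
          exact I.add_mem (I.comp_right _ hI1) (I.comp_right _ hI2)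
        · have hdesc : biprod.desc h₂ h₂' = biprod.fst ≫ h₂ + biprod.snd ≫ h₂' := by
            apply biprod.hom_ext' <;> simp
          rw [hdesc]
          exact rad_add (rad_comp_left _ hJ1) (rad_comp_left _ hJ2)
      · rintro g _ ⟨Z, h₁, h₂, hI1, hJ1, rfl⟩
        exact ⟨Z, -h₁, h₂, I.neg_mem hI1, hJ1, by rw [Preadditive.neg_comp]⟩
    obtain ⟨Z, h₁, h₂, hI1, hJ1, hcomp⟩ := hP
    obtain ⟨s, hs⟩ := hirr h₁ h₂ hcomp hI1
    have h0 : IsIso (𝟙 Y - s ≫ h₂) := swap_isIso h₂ s (hJ1 s)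
    rw [hs, sub_self] at h0
    have hid : 𝟙 Y = 0 := by
      have h1 : (0 : Y ⟶ Y) ≫ inv (0 : Y ⟶ Y) = 𝟙 Y := IsIso.hom_inv_id _
      rw [Limits.zero_comp] at h1
      exact h1.symm
    exact hY.1 ((IsZero.iff_id_eq_zero Y).mpr hid)
  · rintro ⟨hfI, hnot⟩
    refine ⟨hfI, ?_⟩
    intro Z h₁ h₂ hcomp hI1
    by_contra hsplit
    push_neg at hsplit
    have hrad : InJacobsonRadical h₂ := by
      intro g
      rcases isIso_or_isIso_one_sub K hY (g ≫ h₂) with h | h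
      · exact absurd (by rw [Category.assoc, IsIso.inv_hom_id])
          (hsplit (inv (g ≫ h₂) ≫ g))
      · exact swap_isIso g h₂ h
    exact hnot (AddSubgroup.subset_closure ⟨Z, h₁, h₂, hI1, hrad, hcomp⟩)
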